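/- Let I = I_fin, the ideal of subsets of ℕ×ℕ contained in a finite union of rows and columns (equivalently, sets whose double natural density counting function is eventually handled by finitely many rows/columns). If x = {x_{jk}} is an I_fin-statistically pre-Cauchy double sequence of reals and x_{jk} ∉ (α,β) for all (j,k), then with A = {(j,k) : x_{jk} ≤ α} and B = {(j,k) : x_{jk} ≥ β}, either d(A) = 0 or d(B) = 0, where d denotes double natural density. -/

import Mathlib

open Set

def IsIdeal {α : Type*} (I : Set (Set α)) : Prop :=
  ∅ ∈ I ∧ (∀ A B : Set α, A ∈ I → B ∈ I → A ∪ B ∈ I) ∧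
    (∀ A B : Set α, B ⊆ A → A ∈ I → B ∈ I)

def Admissible (I : Set (Set (ℕ × ℕ))) : Prop :=
  IsIdeal I ∧ Set.univ ∉ I ∧ ∀ p : ℕ × ℕ, ({p} : Set (ℕ × ℕ)) ∈ I

def StronglyAdmissible (I : Set (Set (ℕ × ℕ))) : Prop :=
  IsIdeal I ∧ Set.univ ∉ I ∧
    ∀ i : ℕ, ({i} ×ˢ (Set.univ : Set ℕ)) ∈ I ∧ ((Set.univ : Set ℕ) ×ˢ {i}) ∈ I

/-- `dens A m n = (1/(mn)) |{(j,k) ∈ A : j ≤ m, k ≤ n}|`. -/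
noncomputable def dens (A : Set (ℕ × ℕ)) (m n : ℕ) : ℝ :=
  ({jk ∈ A | 1 ≤ jk.1 ∧ jk.1 ≤ m ∧ 1 ≤ jk.2 ∧ jk.2 ≤ n}.ncard : ℝ) / (m * n)

/-- `dens2 A m n = (1/(m²n²)) |{((j,k),(p,q)) ∈ A : j,p ≤ m, k,q ≤ n}|`. -/
noncomputable def dens2 (A : Set ((ℕ × ℕ) × (ℕ × ℕ))) (m n : ℕ) : ℝ :=
  ({q ∈ A | 1 ≤ q.1.1 ∧ q.1.1 ≤ m ∧ 1 ≤ q.2.1 ∧ q.2.1 ≤ m ∧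
      1 ≤ q.1.2 ∧ q.1.2 ≤ n ∧ 1 ≤ q.2.2 ∧ q.2.2 ≤ n}.ncard : ℝ) /
    ((m : ℝ) ^ 2 * (n : ℝ) ^ 2)

/-- `I`-statistical convergence of a real double sequence. -/
def IStatConv (I : Set (Set (ℕ × ℕ))) (x : ℕ → ℕ → ℝ) (L : ℝ) : Prop :=
  ∀ ε > (0:ℝ), ∀ δ > (0:ℝ),
    {mn : ℕ × ℕ | δ ≤ dens {jk : ℕ × ℕ | ε ≤ |x jk.1 jk.2 - L|} mn.1 mn.2} ∈ I

/-- `I`-statistically pre-Cauchy real double sequences. -/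
def IStatPreCauchy (I : Set (Set (ℕ × ℕ))) (x : ℕ → ℕ → ℝ) : Prop :=
  ∀ ε > (0:ℝ), ∀ δ > (0:ℝ),
    {mn : ℕ × ℕ | δ ≤ dens2
      {q : (ℕ × ℕ) × (ℕ × ℕ) | ε ≤ |x q.1.1 q.1.2 - x q.2.1 q.2.2|} mn.1 mn.2} ∈ I

/-- Convergence of a real double sequence in Pringsheim's sense. -/
def PTendsto (y : ℕ → ℕ → ℝ) (a : ℝ) : Prop :=
  ∀ ε > (0:ℝ), ∃ N : ℕ, ∀ m ≥ N, ∀ n ≥ N, |y m n - a| < ε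

/-- `I`-limit of a real double sequence. -/
def ILim (I : Set (Set (ℕ × ℕ))) (y : ℕ → ℕ → ℝ) (L : ℝ) : Prop :=
  ∀ ε > (0:ℝ), {mn : ℕ × ℕ | ε ≤ |y mn.1 mn.2 - L|} ∈ I

/-- `I`-asymptotic density zero. -/
def IDensZero (I : Set (Set (ℕ × ℕ))) (A : Set (ℕ × ℕ)) : Prop :=
  ILim I (fun m n => dens A m n) 0

/-- Ordinary statistically pre-Cauchy condition (the `I_fin`-statistical
pre-Cauchy condition), via Pringsheim limits. -/
def StatPreCauchy (x : ℕ → ℕ → ℝ) : Prop :=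
  ∀ ε > (0:ℝ), PTendsto (fun m n => dens2
    {q : (ℕ × ℕ) × (ℕ × ℕ) | ε ≤ |x q.1.1 q.1.2 - x q.2.1 q.2.2|} m n) 0

/-- If `x` is an `I_fin`-statistically (i.e. ordinarily statistically)
pre-Cauchy real double sequence with `x_{jk} ∉ (α,β)` for all `(j,k)`, then
with `A = {(j,k) : x_{jk} ≤ α}` and `B = {(j,k) : x_{jk} ≥ β}`, either `A` or
`B` has double natural density `0`. -/
lemma dens_eq_card (S : Set (ℕ × ℕ)) [DecidablePred (· ∈ S)] (m n : ℕ) :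
    dens S m n =
      (((Finset.Icc 1 m ×ˢ Finset.Icc 1 n).filter (· ∈ S)).card : ℝ) / (m * n) := by
  have h : {jk ∈ S | 1 ≤ jk.1 ∧ jk.1 ≤ m ∧ 1 ≤ jk.2 ∧ jk.2 ≤ n}
      = ↑((Finset.Icc 1 m ×ˢ Finset.Icc 1 n).filter (· ∈ S)) := by
    ext jk
    simp only [Finset.coe_filter, Finset.mem_product, Finset.mem_Icc, Set.mem_setOf_eq,
      Set.mem_sep_iff]
    tauto
  rw [dens, h, Set.ncard_coe_finset]

lemma dens2_eq_card (S : Set ((ℕ × ℕ) × (ℕ × ℕ))) [DecidablePred (· ∈ S)] (m n : ℕ) :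
    dens2 S m n =
      ((((Finset.Icc 1 m ×ˢ Finset.Icc 1 n) ×ˢ (Finset.Icc 1 m ×ˢ Finset.Icc 1 n)).filter
        (· ∈ S)).card : ℝ) / ((m : ℝ) ^ 2 * (n : ℝ) ^ 2) := by
  have h : {q ∈ S | 1 ≤ q.1.1 ∧ q.1.1 ≤ m ∧ 1 ≤ q.2.1 ∧ q.2.1 ≤ m ∧
      1 ≤ q.1.2 ∧ q.1.2 ≤ n ∧ 1 ≤ q.2.2 ∧ q.2.2 ≤ n}
      = ↑(((Finset.Icc 1 m ×ˢ Finset.Icc 1 n) ×ˢ (Finset.Icc 1 m ×ˢ Finset.Icc 1 n)).filter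
        (· ∈ S)) := by
    ext q
    simp only [Finset.coe_filter, Finset.mem_product, Finset.mem_Icc, Set.mem_setOf_eq,
      Set.mem_sep_iff]
    tauto
  rw [dens2, h, Set.ncard_coe_finset]

lemma step_bound (a a' m n : ℕ) (hm : 1 ≤ m) (hn : 1 ≤ n)
    (h1 : a ≤ a') (h2 : a' ≤ a + n) (h3 : a ≤ m * n) :
    |(a' : ℝ) / ((m + 1) * n) - (a : ℝ) / (m * n)| ≤ 1 / (m + 1) := by
  have hm' : (1:ℝ) ≤ m := by exact_mod_cast hm
  have hn' : (1:ℝ) ≤ n := by exact_mod_cast hn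
  have h1' : (a:ℝ) ≤ a' := by exact_mod_cast h1
  have h2' : (a':ℝ) ≤ a + n := by exact_mod_cast h2
  have h3' : (a:ℝ) ≤ m * n := by exact_mod_cast h3
  have hp1 : (0:ℝ) < (m + 1) * n := by nlinarith
  have hp2 : (0:ℝ) < (m:ℝ) * n := by nlinarith
  have hp3 : (0:ℝ) < (m:ℝ) + 1 := by linarith
  rw [abs_le]
  constructor
  · rw [neg_le, neg_sub, div_sub_div _ _ (ne_of_gt hp2) (ne_of_gt hp1),
      div_le_div_iff₀ (by nlinarith) hp3]
    nlinarith [mul_le_mul_of_nonneg_right h3' (mul_nonneg (by linarith : (0:ℝ) ≤ (n:ℝ)) hp3.le),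
      mul_le_mul_of_nonneg_left (mul_le_mul_of_nonneg_right h1' hp3.le) hp2.le]
  · rw [div_sub_div _ _ (ne_of_gt hp1) (ne_of_gt hp2),
      div_le_div_iff₀ (by nlinarith) hp3]
    nlinarith [mul_le_mul_of_nonneg_right (mul_le_mul_of_nonneg_right h2' hp2.le) hp3.le,
      mul_nonneg (mul_nonneg (Nat.cast_nonneg a : (0:ℝ) ≤ (a:ℝ)) (by linarith : (0:ℝ) ≤ (n:ℝ))) hp3.le]

theorem statPreCauchy_dens_dichotomy
    (x : ℕ → ℕ → ℝ) (α β : ℝ) (hαβ : α < β)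
    (havoid : ∀ j k : ℕ, x j k ∉ Set.Ioo α β)
    (hx : StatPreCauchy x) :
    PTendsto (fun m n => dens {jk : ℕ × ℕ | x jk.1 jk.2 ≤ α} m n) 0 ∨
    PTendsto (fun m n => dens {jk : ℕ × ℕ | β ≤ x jk.1 jk.2} m n) 0 := by
  classical
  set A : Set (ℕ × ℕ) := {jk : ℕ × ℕ | x jk.1 jk.2 ≤ α} with hAdef
  set B : Set (ℕ × ℕ) := {jk : ℕ × ℕ | β ≤ x jk.1 jk.2} with hBdef
  set S2 : Set ((ℕ × ℕ) × (ℕ × ℕ)) :=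
    {q : (ℕ × ℕ) × (ℕ × ℕ) | β - α ≤ |x q.1.1 q.1.2 - x q.2.1 q.2.2|} with hS2def
  have hcover : ∀ jk : ℕ × ℕ, jk ∈ A ∨ jk ∈ B := by
    intro jk
    have := havoid jk.1 jk.2
    simp only [Set.mem_Ioo, not_and, not_lt] at this
    by_cases h : x jk.1 jk.2 ≤ α
    · exact Or.inl h
    · exact Or.inr (this (by linarith))
  have hABdisj : ∀ jk : ℕ × ℕ, jk ∈ A → jk ∈ B → False := by
    intro jk h1 h2
    simp only [hAdef, hBdef, Set.mem_setOf_eq] at h1 h2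
    linarith
  -- Finset counts
  set box : ℕ → ℕ → Finset (ℕ × ℕ) := fun m n => Finset.Icc 1 m ×ˢ Finset.Icc 1 n with hbox
  set cA : ℕ → ℕ → ℕ := fun m n => ((box m n).filter (· ∈ A)).card with hcA
  set cB : ℕ → ℕ → ℕ := fun m n => ((box m n).filter (· ∈ B)).card with hcB
  have boxcard : ∀ m n : ℕ, (box m n).card = m * n := by
    intro m n
    rw [hbox]
    rw [Finset.card_product, Nat.card_Icc, Nat.card_Icc]
    simp
  have hdA : ∀ m n : ℕ, dens A m n = (cA m n : ℝ) / (m * n) := fun m n => dens_eq_card A m n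
  have hdB : ∀ m n : ℕ, dens B m n = (cB m n : ℝ) / (m * n) := fun m n => dens_eq_card B m n
  have hcsum : ∀ m n : ℕ, cA m n + cB m n = m * n := by
    intro m n
    have hd : Disjoint ((box m n).filter (· ∈ A)) ((box m n).filter (· ∈ B)) := by
      rw [Finset.disjoint_left]
      intro jk h1 h2
      rw [Finset.mem_filter] at h1 h2
      exact hABdisj jk h1.2 h2.2
    have hU : (box m n).filter (· ∈ A) ∪ (box m n).filter (· ∈ B) = box m n := by
      ext jk
      simp only [Finset.mem_union, Finset.mem_filter]
      constructor
      · rintro (⟨h, _⟩ | ⟨h, _⟩) <;> exact h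
      · intro h
        rcases hcover jk with hh | hh
        · exact Or.inl ⟨h, hh⟩
        · exact Or.inr ⟨h, hh⟩
    rw [hcA, hcB]
    simp only
    rw [← Finset.card_union_of_disjoint hd, hU]
    exact boxcard m n
  have hcA_le : ∀ m n : ℕ, cA m n ≤ m * n := by
    intro m n
    rw [← boxcard m n, hcA]
    exact Finset.card_filter_le _ _
  have hsum : ∀ m n : ℕ, 1 ≤ m → 1 ≤ n → dens A m n + dens B m n = 1 := by
    intro m n hm hn
    rw [hdA, hdB, ← add_div]
    rw [show ((cA m n : ℝ) + cB m n) = ((cA m n + cB m n : ℕ) : ℝ) by push_cast; ring, hcsum]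
    have : (0:ℝ) < (m : ℝ) * n := by
      have h1 : (1:ℝ) ≤ m := by exact_mod_cast hm
      have h2 : (1:ℝ) ≤ n := by exact_mod_cast hn
      nlinarith
    field_simp
    push_cast
    rfl
  have hdens_nonneg : ∀ (S : Set (ℕ × ℕ)) (m n : ℕ), 0 ≤ dens S m n := by
    intro S m n
    rw [dens]
    positivity
  have hdens2_nonneg : ∀ m n : ℕ, 0 ≤ dens2 S2 m n := by
    intro m n
    rw [dens2]
    positivity
  -- pair count lower bound
  have hpair : ∀ m n : ℕ, 1 ≤ m → 1 ≤ n →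
      2 * dens A m n * dens B m n ≤ dens2 S2 m n := by
    intro m n hm hn
    have hm' : (1:ℝ) ≤ m := by exact_mod_cast hm
    have hn' : (1:ℝ) ≤ n := by exact_mod_cast hn
    set fA := (box m n).filter (· ∈ A) with hfA
    set fB := (box m n).filter (· ∈ B) with hfB
    have hsub : (fA ×ˢ fB) ∪ (fB ×ˢ fA) ⊆ ((box m n) ×ˢ (box m n)).filter (· ∈ S2) := by
      intro q hq
      rw [Finset.mem_union, Finset.mem_product, Finset.mem_product] at hq
      rw [Finset.mem_filter, Finset.mem_product]
      rcases hq with ⟨h1, h2⟩ | ⟨h1, h2⟩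
      · rw [hfA, Finset.mem_filter] at h1
        rw [hfB, Finset.mem_filter] at h2
        refine ⟨⟨h1.1, h2.1⟩, ?_⟩
        have ha : x q.1.1 q.1.2 ≤ α := h1.2
        have hb : β ≤ x q.2.1 q.2.2 := h2.2
        show β - α ≤ |x q.1.1 q.1.2 - x q.2.1 q.2.2|
        exact le_abs.mpr (Or.inr (by linarith))
      · rw [hfB, Finset.mem_filter] at h1
        rw [hfA, Finset.mem_filter] at h2
        refine ⟨⟨h1.1, h2.1⟩, ?_⟩
        have ha : x q.2.1 q.2.2 ≤ α := h2.2
        have hb : β ≤ x q.1.1 q.1.2 := h1.2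
        show β - α ≤ |x q.1.1 q.1.2 - x q.2.1 q.2.2|
        exact le_abs.mpr (Or.inl (by linarith))
    have hdj : Disjoint (fA ×ˢ fB) (fB ×ˢ fA) := by
      rw [Finset.disjoint_left]
      intro q h1 h2
      rw [Finset.mem_product] at h1 h2
      rw [hfA, Finset.mem_filter] at h1
      rw [hfB, Finset.mem_filter] at h2
      exact hABdisj q.1 h1.1.2 h2.1.2
    have hcard : 2 * (cA m n) * (cB m n) ≤
        (((box m n) ×ˢ (box m n)).filter (· ∈ S2)).card := by
      calc 2 * (cA m n) * (cB m n)
          = (fA ×ˢ fB).card + (fB ×ˢ fA).card := by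
            rw [Finset.card_product, Finset.card_product, hcA, hcB]; ring
        _ = ((fA ×ˢ fB) ∪ (fB ×ˢ fA)).card := (Finset.card_union_of_disjoint hdj).symm
        _ ≤ _ := Finset.card_le_card hsub
    rw [hdA, hdB, dens2_eq_card S2 m n]
    have hm0 : (0:ℝ) < (m:ℝ) := by linarith
    have hn0 : (0:ℝ) < (n:ℝ) := by linarith
    have hD : (0:ℝ) < (m:ℝ)^2 * (n:ℝ)^2 := by positivity
    have hmn : ((m:ℝ) * n) ≠ 0 := by positivity
    have heq : 2 * ((cA m n : ℝ) / (m * n)) * ((cB m n : ℝ) / (m * n))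
        = (2 * (cA m n) * (cB m n) : ℕ) / ((m:ℝ)^2 * (n:ℝ)^2) := by
      push_cast
      field_simp
    rw [heq]
    exact (div_le_div_iff_of_pos_right hD).mpr (by exact_mod_cast hcard)
  -- step bounds
  have hstep_m : ∀ m n : ℕ, 1 ≤ m → 1 ≤ n →
      |dens A (m+1) n - dens A m n| ≤ 1/2 := by
    intro m n hm hn
    have hmono : cA m n ≤ cA (m+1) n := by
      apply Finset.card_le_card
      apply Finset.filter_subset_filter
      exact Finset.product_subset_product (Finset.Icc_subset_Icc_right (Nat.le_succ m))
        (subset_refl _)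
    have hincr : cA (m+1) n ≤ cA m n + n := by
      have hsub : (box (m+1) n).filter (· ∈ A) ⊆
          (box m n).filter (· ∈ A) ∪ (({m+1} : Finset ℕ) ×ˢ Finset.Icc 1 n) := by
        intro jk hjk
        rw [Finset.mem_filter, Finset.mem_product, Finset.mem_Icc, Finset.mem_Icc] at hjk
        rw [Finset.mem_union, Finset.mem_filter, Finset.mem_product, Finset.mem_Icc,
          Finset.mem_Icc, Finset.mem_product, Finset.mem_singleton, Finset.mem_Icc]
        obtain ⟨⟨⟨h1a, h1b⟩, h2⟩, hP⟩ := hjk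
        by_cases hcc : jk.1 ≤ m
        · exact Or.inl ⟨⟨⟨h1a, hcc⟩, h2⟩, hP⟩
        · exact Or.inr ⟨by omega, h2⟩
      calc cA (m+1) n ≤ ((box m n).filter (· ∈ A) ∪ (({m+1} : Finset ℕ) ×ˢ Finset.Icc 1 n)).card :=
            Finset.card_le_card hsub
        _ ≤ cA m n + (({m+1} : Finset ℕ) ×ˢ Finset.Icc 1 n).card := Finset.card_union_le _ _
        _ = cA m n + n := by
            rw [Finset.card_product, Finset.card_singleton, Nat.card_Icc]
            simp
    have hb := step_bound (cA m n) (cA (m+1) n) m n hm hn hmono hincr (hcA_le m n)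
    have h2 : (1:ℝ)/(m+1) ≤ 1/2 := by
      have hm' : (1:ℝ) ≤ m := by exact_mod_cast hm
      rw [div_le_div_iff₀ (by linarith) (by norm_num)]
      linarith
    rw [hdA, hdA]
    push_cast
    exact le_trans hb h2
  have hstep_n : ∀ m n : ℕ, 1 ≤ m → 1 ≤ n →
      |dens A m (n+1) - dens A m n| ≤ 1/2 := by
    intro m n hm hn
    have hmono : cA m n ≤ cA m (n+1) := by
      apply Finset.card_le_card
      apply Finset.filter_subset_filter
      exact Finset.product_subset_product (subset_refl _)
        (Finset.Icc_subset_Icc_right (Nat.le_succ n))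
    have hincr : cA m (n+1) ≤ cA m n + m := by
      have hsub : (box m (n+1)).filter (· ∈ A) ⊆
          (box m n).filter (· ∈ A) ∪ (Finset.Icc 1 m ×ˢ ({n+1} : Finset ℕ)) := by
        intro jk hjk
        rw [Finset.mem_filter, Finset.mem_product, Finset.mem_Icc, Finset.mem_Icc] at hjk
        rw [Finset.mem_union, Finset.mem_filter, Finset.mem_product, Finset.mem_Icc,
          Finset.mem_Icc, Finset.mem_product, Finset.mem_singleton, Finset.mem_Icc]
        obtain ⟨⟨h1, ⟨h2a, h2b⟩⟩, hP⟩ := hjk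
        by_cases hcc : jk.2 ≤ n
        · exact Or.inl ⟨⟨h1, h2a, hcc⟩, hP⟩
        · exact Or.inr ⟨h1, by omega⟩
      calc cA m (n+1) ≤ ((box m n).filter (· ∈ A) ∪ (Finset.Icc 1 m ×ˢ ({n+1} : Finset ℕ))).card :=
            Finset.card_le_card hsub
        _ ≤ cA m n + (Finset.Icc 1 m ×ˢ ({n+1} : Finset ℕ)).card := Finset.card_union_le _ _
        _ = cA m n + m := by
            rw [Finset.card_product, Finset.card_singleton, Nat.card_Icc]
            simp
    have hb := step_bound (cA m n) (cA m (n+1)) n m hn hm hmono hincr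
      (by rw [Nat.mul_comm]; exact hcA_le m n)
    have h2 : (1:ℝ)/(n+1) ≤ 1/2 := by
      have hn' : (1:ℝ) ≤ n := by exact_mod_cast hn
      rw [div_le_div_iff₀ (by linarith) (by norm_num)]
      linarith
    rw [hdA, hdA]
    push_cast
    rw [mul_comm ((m:ℝ)) ((n:ℝ) + 1), mul_comm ((m:ℝ)) ((n:ℝ))]
    exact le_trans hb h2
  -- the pre-Cauchy Pringsheim limit
  have hPd2 : PTendsto (fun m n => dens2 S2 m n) 0 := hx (β - α) (by linarith)
  obtain ⟨N₀, hN₀⟩ := hPd2 (3/8) (by norm_num)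
  set N := max N₀ 1 with hNdef
  have hN1 : 1 ≤ N := le_max_right _ _
  have hdich : ∀ m n : ℕ, N ≤ m → N ≤ n → dens A m n < 1/4 ∨ 3/4 < dens A m n := by
    intro m n hm hn
    have hm1 : 1 ≤ m := le_trans hN1 hm
    have hn1 : 1 ≤ n := le_trans hN1 hn
    have h0 := hN₀ m (le_trans (le_max_left _ _) hm) n (le_trans (le_max_left _ _) hn)
    rw [sub_zero, abs_of_nonneg (hdens2_nonneg m n)] at h0
    have hp := hpair m n hm1 hn1
    have hsv := hsum m n hm1 hn1
    have hA0 := hdens_nonneg A m n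
    have hB0 := hdens_nonneg B m n
    by_contra hcon
    push_neg at hcon
    obtain ⟨h1, h2⟩ := hcon
    nlinarith [mul_nonneg (by linarith : (0:ℝ) ≤ dens A m n - 1/4)
      (by linarith : (0:ℝ) ≤ 3/4 - dens A m n)]
  rcases hdich N N le_rfl le_rfl with hc | hc
  · -- dens A → 0
    left
    have hall : ∀ m, N ≤ m → ∀ n, N ≤ n → dens A m n < 1/4 := by
      have hrow : ∀ m, N ≤ m → dens A m N < 1/4 := by
        intro m hm
        induction m, hm using Nat.le_induction with
        | base => exact hc
        | succ m hm ih =>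
          have hs := hstep_m m N (le_trans hN1 hm) hN1
          rw [abs_le] at hs
          rcases hdich (m+1) N (le_trans hm (Nat.le_succ m)) le_rfl with h | h
          · exact h
          · linarith [hs.2]
      intro m hm n hn
      induction n, hn using Nat.le_induction with
      | base => exact hrow m hm
      | succ n hn ih =>
        have hs := hstep_n m n (le_trans hN1 hm) (le_trans hN1 hn)
        rw [abs_le] at hs
        rcases hdich m (n+1) hm (le_trans hn (Nat.le_succ n)) with h | h
        · exact h
        · linarith [hs.2]
    intro ε hε
    obtain ⟨N₁, hN₁⟩ := hPd2 (3*ε/2) (by linarith)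
    refine ⟨max N N₁, ?_⟩
    intro m hm n hn
    have hmN : N ≤ m := le_trans (le_max_left _ _) hm
    have hnN : N ≤ n := le_trans (le_max_left _ _) hn
    have hm1 : 1 ≤ m := le_trans hN1 hmN
    have hn1 : 1 ≤ n := le_trans hN1 hnN
    have hfa := hall m hmN n hnN
    have h0 := hN₁ m (le_trans (le_max_right _ _) hm) n (le_trans (le_max_right _ _) hn)
    rw [sub_zero, abs_of_nonneg (hdens2_nonneg m n)] at h0
    have hp := hpair m n hm1 hn1
    have hsv := hsum m n hm1 hn1
    have hA0 := hdens_nonneg A m n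
    have hB0 := hdens_nonneg B m n
    rw [sub_zero, abs_of_nonneg hA0]
    nlinarith [mul_nonneg hA0 (by linarith : (0:ℝ) ≤ dens B m n - 3/4)]
  · -- dens B → 0
    right
    have hall : ∀ m, N ≤ m → ∀ n, N ≤ n → 3/4 < dens A m n := by
      have hrow : ∀ m, N ≤ m → 3/4 < dens A m N := by
        intro m hm
        induction m, hm using Nat.le_induction with
        | base => exact hc
        | succ m hm ih =>
          have hs := hstep_m m N (le_trans hN1 hm) hN1
          rw [abs_le] at hs
          rcases hdich (m+1) N (le_trans hm (Nat.le_succ m)) le_rfl with h | h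
          · linarith [hs.1]
          · exact h
      intro m hm n hn
      induction n, hn using Nat.le_induction with
      | base => exact hrow m hm
      | succ n hn ih =>
        have hs := hstep_n m n (le_trans hN1 hm) (le_trans hN1 hn)
        rw [abs_le] at hs
        rcases hdich m (n+1) hm (le_trans hn (Nat.le_succ n)) with h | h
        · linarith [hs.1]
        · exact h
    intro ε hε
    obtain ⟨N₁, hN₁⟩ := hPd2 (3*ε/2) (by linarith)
    refine ⟨max N N₁, ?_⟩
    intro m hm n hn
    have hmN : N ≤ m := le_trans (le_max_left _ _) hm
    have hnN : N ≤ n := le_trans (le_max_left _ _) hn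
    have hm1 : 1 ≤ m := le_trans hN1 hmN
    have hn1 : 1 ≤ n := le_trans hN1 hnN
    have hfa := hall m hmN n hnN
    have h0 := hN₁ m (le_trans (le_max_right _ _) hm) n (le_trans (le_max_right _ _) hn)
    rw [sub_zero, abs_of_nonneg (hdens2_nonneg m n)] at h0
    have hp := hpair m n hm1 hn1
    have hsv := hsum m n hm1 hn1
    have hA0 := hdens_nonneg A m n
    have hB0 := hdens_nonneg B m n
    rw [sub_zero, abs_of_nonneg hB0]
    nlinarith [mul_nonneg hB0 (by linarith : (0:ℝ) ≤ dens A m n - 3/4)]
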